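/- Fix α ∈ (0,1] and λ > 0, and let K ⊆ ℝ^N be a closed convex set with 0 ∈ K. Define γ_{α,λ}(ξ) := (α/(α+1)) (1 + d_K²(ξ) ∧ λ²)^{(α+1)/(2α)} + (1/2)(1+λ²)^{1/(2α) - 1/2} (d_K²(ξ) - λ²)_+. Then γ_{α,λ} is convex on ℝ^N. -/

import Mathlib

open Set Metric Real

/-- The regularized Norton–Hoff potential `γ_{α,λ}` is convex. -/
theorem stmt9 {N : ℕ} (α lam : ℝ) (hα : α ∈ Set.Ioc (0 : ℝ) 1) (hlam : 0 < lam)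
    (K : Set (EuclideanSpace ℝ (Fin N))) (hKc : IsClosed K) (hKconv : Convex ℝ K)
    (h0 : (0 : EuclideanSpace ℝ (Fin N)) ∈ K)
    (γ : EuclideanSpace ℝ (Fin N) → ℝ)
    (hγ : ∀ ξ, γ ξ =
      α / (α + 1) * (1 + min (Metric.infDist ξ K ^ 2) (lam ^ 2)) ^ ((α + 1) / (2 * α)) +
        1 / 2 * (1 + lam ^ 2) ^ (1 / (2 * α) - 1 / 2) *
          max (Metric.infDist ξ K ^ 2 - lam ^ 2) 0) :
    ConvexOn ℝ Set.univ γ := by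
  obtain ⟨hα0, hα1⟩ := hα
  set L : ℝ := lam ^ 2 with hLdef
  have hL0 : 0 < L := by positivity
  set p : ℝ := (α + 1) / (2 * α) with hpdef
  have hp1 : 1 ≤ p := by
    rw [hpdef, le_div_iff₀ (by linarith)]; linarith
  have hexp : 1 / (2 * α) - 1 / 2 = p - 1 := by
    rw [hpdef]; field_simp; ring
  set c1 : ℝ := α / (α + 1) with hc1def
  set c2 : ℝ := 1 / 2 * (1 + L) ^ (1 / (2 * α) - 1 / 2) with hc2def
  have hc2' : c2 = 1 / 2 * (1 + L) ^ (p - 1) := by rw [hc2def, hexp]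
  have hc1p : c1 * p = 1 / 2 := by
    rw [hc1def, hpdef]; field_simp
  set Φ : ℝ → ℝ := fun s => c1 * (1 + min s L) ^ p + c2 * max (s - L) 0 with hΦdef
  set ψ : ℝ → ℝ := fun s => 1 / 2 * (1 + min s L) ^ (p - 1) with hψdef
  -- derivative of the smooth first branch
  have key : ∀ s : ℝ, -1 < s →
      HasDerivAt (fun t : ℝ => c1 * (1 + t) ^ p) (1 / 2 * (1 + s) ^ (p - 1)) s := by
    intro s hs
    have h1 : HasDerivAt (fun t : ℝ => 1 + t) 1 s := (hasDerivAt_id s).const_add 1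
    have h2 := (h1.rpow_const (Or.inr hp1)).const_mul c1
    rw [show (1:ℝ) / 2 * (1 + s) ^ (p - 1) = c1 * (1 * p * (1 + s) ^ (p - 1)) by rw [← hc1p]; ring]
    exact h2
  -- second (affine) branch derivative
  have key2 : ∀ s : ℝ,
      HasDerivAt (fun t : ℝ => c1 * (1 + L) ^ p + c2 * (t - L)) c2 s := by
    intro s
    have h1 : HasDerivAt (fun t : ℝ => c2 * (t - L)) (c2 * 1) s :=
      ((hasDerivAt_id s).sub_const L).const_mul c2
    simpa using h1.const_add (c1 * (1 + L) ^ p)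
  have hΦderiv : ∀ s ∈ Ioi (0 : ℝ), HasDerivAt Φ (ψ s) s := by
    intro s hs
    simp only [mem_Ioi] at hs
    rcases lt_trichotomy s L with h | h | h
    · have hev : Φ =ᶠ[nhds s] fun t : ℝ => c1 * (1 + t) ^ p := by
        filter_upwards [Iio_mem_nhds h] with t ht
        have ht' : t < L := ht
        simp only [hΦdef, min_eq_left ht'.le,
          max_eq_right (by linarith : t - L ≤ 0), mul_zero, add_zero]
      have hd := (key s (by linarith)).congr_of_eventuallyEq hev
      have : ψ s = 1 / 2 * (1 + s) ^ (p - 1) := by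
        simp [hψdef, min_eq_left h.le]
      rwa [this]
    · rw [h]
      have hval : ψ L = 1 / 2 * (1 + L) ^ (p - 1) := by
        rw [hψdef]; simp
      have hleft : HasDerivWithinAt Φ (ψ L) (Iic L) L := by
        rw [hval]
        refine ((key L (by linarith)).hasDerivWithinAt (s := Iic L)).congr
          (fun t ht => ?_) ?_
        · have ht' : t ≤ L := ht
          simp only [hΦdef, min_eq_left ht',
            max_eq_right (by linarith : t - L ≤ 0), mul_zero, add_zero]
        · simp [hΦdef]
      have hright : HasDerivWithinAt Φ (ψ L) (Ici L) L := by
        rw [hval, ← hc2']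
        refine ((key2 L).hasDerivWithinAt (s := Ici L)).congr (fun t ht => ?_) ?_
        · have ht' : L ≤ t := ht
          simp only [hΦdef, min_eq_right ht',
            max_eq_left (by linarith : (0:ℝ) ≤ t - L)]
        · simp [hΦdef]
      have hu := hleft.union hright
      rwa [Iic_union_Ici, hasDerivWithinAt_univ] at hu
    · have hev : Φ =ᶠ[nhds s] fun t : ℝ => c1 * (1 + L) ^ p + c2 * (t - L) := by
        filter_upwards [Ioi_mem_nhds h] with t ht
        have ht' : L < t := ht
        simp only [hΦdef, min_eq_right ht'.le,
          max_eq_left (by linarith : (0:ℝ) ≤ t - L)]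
      have hd := (key2 s).congr_of_eventuallyEq hev
      have : ψ s = c2 := by simp [hψdef, min_eq_right h.le, hc2']
      rwa [this]
  -- continuity of Φ
  have hΦcont : Continuous Φ := by
    have hbase : Continuous fun s : ℝ => 1 + min s L :=
      continuous_const.add (continuous_id.min continuous_const)
    have h1 : Continuous fun s : ℝ => (1 + min s L) ^ p :=
      hbase.rpow_const (fun x => Or.inr (by linarith : (0:ℝ) ≤ p))
    have h2 : Continuous fun s : ℝ => max (s - L) 0 :=
      (continuous_id.sub continuous_const).max continuous_const
    exact (continuous_const.mul h1).add (continuous_const.mul h2)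
  -- convexity of Φ on [0, ∞)
  have hΦconv : ConvexOn ℝ (Ici 0) Φ := by
    refine MonotoneOn.convexOn_of_deriv (convex_Ici 0) hΦcont.continuousOn ?_ ?_
    · rw [interior_Ici]
      exact fun s hs => ((hΦderiv s hs).differentiableAt).differentiableWithinAt
    · rw [interior_Ici]
      intro a ha b hb hab
      rw [(hΦderiv a ha).deriv, (hΦderiv b hb).deriv]
      simp only [hψdef]
      have h1 : (0:ℝ) ≤ 1 + min a L := by
        have := le_min (le_of_lt (mem_Ioi.mp ha)) hL0.le; linarith
      exact mul_le_mul_of_nonneg_left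
        (Real.rpow_le_rpow h1 (by gcongr) (by linarith)) (by norm_num)
  -- monotonicity of Φ on [0, ∞)
  have hΦmono : MonotoneOn Φ (Ici 0) := by
    intro a ha b hb hab
    have hc1nn : 0 ≤ c1 := div_nonneg hα0.le (by linarith)
    have hc2nn : 0 ≤ c2 := by
      rw [hc2def]; positivity
    have h1 : (0:ℝ) ≤ 1 + min a L := by
      have := le_min (mem_Ici.mp ha) hL0.le; linarith
    refine add_le_add ?_ ?_
    · exact mul_le_mul_of_nonneg_left
        (Real.rpow_le_rpow h1 (by gcongr) (by linarith)) hc1nn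
    · exact mul_le_mul_of_nonneg_left (by gcongr) hc2nn
  -- convexity of ξ ↦ infDist ξ K
  have hKne : K.Nonempty := ⟨0, h0⟩
  have hd : ConvexOn ℝ univ (fun ξ => infDist ξ K) := by
    refine ⟨convex_univ, ?_⟩
    intro x _ y _ a b ha hb hab
    obtain ⟨px, hpx, hdx⟩ := hKc.exists_infDist_eq_dist hKne x
    obtain ⟨py, hpy, hdy⟩ := hKc.exists_infDist_eq_dist hKne y
    have hmem : a • px + b • py ∈ K := hKconv hpx hpy ha hb hab
    calc infDist (a • x + b • y) K ≤ dist (a • x + b • y) (a • px + b • py) :=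
          infDist_le_dist_of_mem hmem
      _ ≤ a * dist x px + b * dist y py := by
          rw [dist_eq_norm, dist_eq_norm, dist_eq_norm]
          have heq : (a • x + b • y) - (a • px + b • py) = a • (x - px) + b • (y - py) := by
            rw [smul_sub, smul_sub]; abel
          rw [heq]
          calc ‖a • (x - px) + b • (y - py)‖ ≤ ‖a • (x - px)‖ + ‖b • (y - py)‖ :=
                norm_add_le _ _
            _ = a * ‖x - px‖ + b * ‖y - py‖ := by
                rw [norm_smul, norm_smul, Real.norm_of_nonneg ha, Real.norm_of_nonneg hb]
      _ = a * infDist x K + b * infDist y K := by rw [hdx, hdy]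
  have hd2 : ConvexOn ℝ univ (fun ξ => infDist ξ K ^ 2) := by
    refine ⟨convex_univ, ?_⟩
    intro x _ y _ a b ha hb hab
    have h1 : infDist (a • x + b • y) K ≤ a * infDist x K + b * infDist y K :=
      hd.2 (mem_univ x) (mem_univ y) ha hb hab
    have h2 : infDist (a • x + b • y) K ^ 2 ≤ (a * infDist x K + b * infDist y K) ^ 2 :=
      pow_le_pow_left₀ infDist_nonneg h1 2
    refine h2.trans ?_
    simp only [smul_eq_mul]
    nlinarith [mul_nonneg (mul_nonneg ha hb) (sq_nonneg (infDist x K - infDist y K))]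
  -- put it together
  have hγΦ : ∀ ξ, γ ξ = Φ (infDist ξ K ^ 2) := fun ξ => hγ ξ
  refine ⟨convex_univ, ?_⟩
  intro x _ y _ a b ha hb hab
  rw [hγΦ, hγΦ, hγΦ]
  have hx0 : (0:ℝ) ≤ infDist x K ^ 2 := sq_nonneg _
  have hy0 : (0:ℝ) ≤ infDist y K ^ 2 := sq_nonneg _
  have hz0 : (0:ℝ) ≤ infDist (a • x + b • y) K ^ 2 := sq_nonneg _
  have hcomb : (0:ℝ) ≤ a * infDist x K ^ 2 + b * infDist y K ^ 2 := by positivity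
  calc Φ (infDist (a • x + b • y) K ^ 2)
      ≤ Φ (a * infDist x K ^ 2 + b * infDist y K ^ 2) :=
        hΦmono hz0 hcomb (hd2.2 (mem_univ x) (mem_univ y) ha hb hab)
    _ ≤ a * Φ (infDist x K ^ 2) + b * Φ (infDist y K ^ 2) :=
        hΦconv.2 hx0 hy0 ha hb hab
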